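/- Suppose ε_i > 0 for all i and let Ω̃(ε) = {((u_i,x_i))_i : (u_i,x_i) ∈ G̃_i(ε_i) for all i, Σ_i x_i = d}. Then the modified primal value ṽ(ε) = min over Ω̃(ε) of Σ_i C_i(u_i,x_i) equals v, and the set of minimizers of Σ_i C_i over Ω̃(ε) equals the set of minimizers of Σ_i C_i over Ω. -/
import Mathlib


noncomputable section

/-- Feasible set of a single generator with capacity `xmax`. -/
def Gen (xmax : ℝ) : Set (ℝ × ℝ) :=
  {ux | (ux.1 = 0 ∨ ux.1 = 1) ∧ 0 ≤ ux.2 ∧ ux.2 ≤ ux.1 * xmax}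

/-- Cost of a generator. -/
def Cost (w : ℝ) (c : ℝ → ℝ) (ux : ℝ × ℝ) : ℝ := w * ux.1 + c ux.2

/-- Primal feasible set. -/
def Omega (n : ℕ) (xmax : Fin n → ℝ) (d : ℝ) : Set (Fin n → ℝ × ℝ) :=
  {X | (∀ i, X i ∈ Gen (xmax i)) ∧ ∑ i, (X i).2 = d}

/-- Lower bound `x^c,min` of possible output volumes of generator `i`. -/
def xcmin (n : ℕ) (xmax : Fin n → ℝ) (d : ℝ) (i : Fin n) : ℝ :=
  max (d - ∑ j ∈ Finset.univ.erase i, xmax j) 0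

/-- Upper bound `x^c,max` of possible output volumes of generator `i`. -/
def xcmax (n : ℕ) (xmax : Fin n → ℝ) (d : ℝ) (i : Fin n) : ℝ :=
  min d (xmax i)

/-- The modified feasible set `G̃_i(ε)`. -/
def Gtilde (xmax xcmin xcmax ε : ℝ) : Set (ℝ × ℝ) :=
  {((0 : ℝ), (0 : ℝ))} ∪
    {ux | ux.1 = 1 ∧ max (xcmin - ε) 0 ≤ ux.2 ∧ ux.2 ≤ min (xcmax + ε) xmax}

/-- Modified primal feasible set `Ω̃(ε)`. -/
def OmegaTilde (n : ℕ) (xmax : Fin n → ℝ) (d : ℝ) (ε : Fin n → ℝ) :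
    Set (Fin n → ℝ × ℝ) :=
  {X | (∀ i, X i ∈ Gtilde (xmax i) (xcmin n xmax d i) (xcmax n xmax d i) (ε i)) ∧
    ∑ i, (X i).2 = d}

lemma omegaTilde_eq_omega (n : ℕ) (d : ℝ) (xmax : Fin n → ℝ)
    (hxmax : ∀ i, 0 < xmax i) (ε : Fin n → ℝ) (hε : ∀ i, 0 < ε i) :
    OmegaTilde n xmax d ε = Omega n xmax d := by
  ext X
  constructor
  · rintro ⟨hG, hsum⟩
    refine ⟨fun i => ?_, hsum⟩
    rcases hG i with h0 | ⟨h1, hl, hr⟩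
    · rw [Set.mem_singleton_iff] at h0
      rw [h0]
      exact ⟨Or.inl rfl, le_refl 0, by simp⟩
    · exact ⟨Or.inr h1, le_trans (le_max_right _ _) hl,
        by rw [h1, one_mul]; exact hr.trans (min_le_right _ _)⟩
  · rintro ⟨hG, hsum⟩
    have hx0 : ∀ j, 0 ≤ (X j).2 := fun j => (hG j).2.1
    have hxle : ∀ j, (X j).2 ≤ xmax j := by
      intro j
      rcases (hG j).1 with h0 | h1
      · have := (hG j).2.2
        rw [h0, zero_mul] at this
        exact this.trans (hxmax j).le
      · have := (hG j).2.2
        rwa [h1, one_mul] at this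
    refine ⟨fun i => ?_, hsum⟩
    rcases (hG i).1 with h0 | h1
    · left
      rw [Set.mem_singleton_iff]
      have := (hG i).2.2
      rw [h0, zero_mul] at this
      exact Prod.ext h0 (le_antisymm this (hx0 i))
    · right
      have hxd : (X i).2 ≤ d := by
        rw [← hsum]
        exact Finset.single_le_sum (fun j _ => hx0 j) (Finset.mem_univ i)
      have hlow : d - ∑ j ∈ Finset.univ.erase i, xmax j ≤ (X i).2 := by
        have h1' : (X i).2 + ∑ j ∈ Finset.univ.erase i, (X j).2 = d := by
          rw [← hsum]; exact Finset.add_sum_erase _ (fun j => (X j).2) (Finset.mem_univ i)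
        have h2' : ∑ j ∈ Finset.univ.erase i, (X j).2
            ≤ ∑ j ∈ Finset.univ.erase i, xmax j :=
          Finset.sum_le_sum (fun j _ => hxle j)
        linarith
      refine ⟨h1, ?_, ?_⟩
      · refine max_le ?_ (hx0 i)
        have : xcmin n xmax d i ≤ (X i).2 := max_le hlow (hx0 i)
        have hεi := hε i
        unfold xcmin at this ⊢
        linarith
      · refine le_min ?_ (hxle i)
        have : (X i).2 ≤ xcmax n xmax d i := le_min hxd (hxle i)
        have hεi := hε i
        linarith

/-- For `ε_i > 0` the modified primal problem over `Ω̃(ε)` has the same optimal value `v`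
as the original primal problem, and the same set of minimizers. -/
theorem stmt_12 (n : ℕ) (d : ℝ) (hd : 0 < d)
    (w xmax : Fin n → ℝ) (c : Fin n → ℝ → ℝ)
    (hxmax : ∀ i, 0 < xmax i) (hw : ∀ i, 0 ≤ w i)
    (hconv : ∀ i, ConvexOn ℝ (Set.Icc 0 (xmax i)) (c i))
    (hmono : ∀ i, MonotoneOn (c i) (Set.Icc 0 (xmax i)))
    (hcont : ∀ i, ContinuousOn (c i) (Set.Icc 0 (xmax i)))
    (hc0 : ∀ i, c i 0 = 0)
    (hfeas : d ≤ ∑ i, xmax i)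
    (ε : Fin n → ℝ) (hε : ∀ i, 0 < ε i)
    (v : ℝ)
    (hv : IsLeast {r : ℝ | ∃ X ∈ Omega n xmax d,
        r = ∑ i, Cost (w i) (c i) (X i)} v) :
    IsLeast {r : ℝ | ∃ X ∈ OmegaTilde n xmax d ε,
        r = ∑ i, Cost (w i) (c i) (X i)} v
    ∧ {X ∈ OmegaTilde n xmax d ε | ∀ Y ∈ OmegaTilde n xmax d ε,
          ∑ i, Cost (w i) (c i) (X i) ≤ ∑ i, Cost (w i) (c i) (Y i)}
      = {X ∈ Omega n xmax d | ∀ Y ∈ Omega n xmax d,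
          ∑ i, Cost (w i) (c i) (X i) ≤ ∑ i, Cost (w i) (c i) (Y i)} := by
  rw [omegaTilde_eq_omega n d xmax hxmax ε hε]
  exact ⟨hv, rfl⟩
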